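/- Let α ∈ ℂ, let k ∈ ℂ be nonzero, and let x₂, x₄, x₆ : ℝ → ℂ be differentiable functions satisfying the dynamical system x₂' = (2/3)x₄ + 2(α−1)x₂², x₄' = 3x₆ + 2(2α+1)x₂x₄, x₆' = 6(α+1)x₂x₆. Then the function U = (1/k)x₂ satisfies the third-order differential equation U''' − 2k(7α+2)UU'' − 2k(4α−1)(U')² + 24k²(3α²+α−1)U²U' − 24k³(α+1)(α−1)(2α+1)U⁴ = 0. -/

import Mathlib

set_option maxHeartbeats 1600000


/-- If `x₂, x₄, x₆ : ℝ → ℂ` are differentiable and satisfy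
`x₂' = (2/3)x₄ + 2(α−1)x₂²`, `x₄' = 3x₆ + 2(2α+1)x₂x₄`, `x₆' = 6(α+1)x₂x₆`,
then `U = (1/k)x₂` satisfies the third-order equation
`U''' − 2k(7α+2)UU'' − 2k(4α−1)(U')² + 24k²(3α²+α−1)U²U' − 24k³(α+1)(α−1)(2α+1)U⁴ = 0`. -/
theorem third_order_equation_from_deformed_system (α k : ℂ) (hk : k ≠ 0)
    (x2 x4 x6 : ℝ → ℂ)
    (hx2 : Differentiable ℝ x2) (hx4 : Differentiable ℝ x4) (hx6 : Differentiable ℝ x6)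
    (h2 : ∀ t, deriv x2 t = 2/3 * x4 t + 2 * (α - 1) * x2 t ^ 2)
    (h4 : ∀ t, deriv x4 t = 3 * x6 t + 2 * (2 * α + 1) * x2 t * x4 t)
    (h6 : ∀ t, deriv x6 t = 6 * (α + 1) * x2 t * x6 t)
    (U : ℝ → ℂ) (hU : U = fun t => 1 / k * x2 t) :
    ∀ t, iteratedDeriv 3 U t
        - 2 * k * (7 * α + 2) * U t * iteratedDeriv 2 U t
        - 2 * k * (4 * α - 1) * (deriv U t) ^ 2
        + 24 * k ^ 2 * (3 * α ^ 2 + α - 1) * (U t) ^ 2 * deriv U t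
        - 24 * k ^ 3 * (α + 1) * (α - 1) * (2 * α + 1) * (U t) ^ 4 = 0 := by
  -- pointwise HasDerivAt versions of the system
  have h2' : ∀ t, HasDerivAt x2 (2/3 * x4 t + 2 * (α - 1) * x2 t ^ 2) t := by
    intro t; have := (hx2 t).hasDerivAt; rwa [h2 t] at this
  have h4' : ∀ t, HasDerivAt x4 (3 * x6 t + 2 * (2 * α + 1) * x2 t * x4 t) t := by
    intro t; have := (hx4 t).hasDerivAt; rwa [h4 t] at this
  have h6' : ∀ t, HasDerivAt x6 (6 * (α + 1) * x2 t * x6 t) t := by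
    intro t; have := (hx6 t).hasDerivAt; rwa [h6 t] at this
  -- x2'' : derivative of G t := 2/3 * x4 t + 2 * (α - 1) * x2 t ^ 2
  have hG : ∀ t, HasDerivAt (fun t => 2/3 * x4 t + 2 * (α - 1) * x2 t ^ 2)
      (2/3 * (3 * x6 t + 2 * (2 * α + 1) * x2 t * x4 t)
        + 2 * (α - 1) * (2 * x2 t * (2/3 * x4 t + 2 * (α - 1) * x2 t ^ 2))) t := by
    intro t
    have p1 : HasDerivAt (fun t => 2/3 * x4 t)
        (2/3 * (3 * x6 t + 2 * (2 * α + 1) * x2 t * x4 t)) t := (h4' t).const_mul (2/3)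
    have p2 : HasDerivAt (fun t => 2 * (α - 1) * x2 t ^ 2)
        (2 * (α - 1) * (2 * x2 t * (2/3 * x4 t + 2 * (α - 1) * x2 t ^ 2))) t := by
      have hmul := ((h2' t).mul (h2' t)).const_mul (2 * (α - 1))
      have hfe : (fun t => 2 * (α - 1) * x2 t ^ 2)
          = fun t => 2 * (α - 1) * (x2 t * x2 t) := by
        funext s; ring
      rw [hfe]
      exact hmul.congr_deriv (by ring)
    exact p1.add p2
  have hd2 : deriv x2 = fun t => 2/3 * x4 t + 2 * (α - 1) * x2 t ^ 2 := funext h2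
  -- x2''' : derivative of GG
  have hGG : ∀ t, HasDerivAt (fun t =>
      2/3 * (3 * x6 t + 2 * (2 * α + 1) * x2 t * x4 t)
        + 2 * (α - 1) * (2 * x2 t * (2/3 * x4 t + 2 * (α - 1) * x2 t ^ 2)))
      (2/3 * (3 * (6 * (α + 1) * x2 t * x6 t)
          + 2 * (2 * α + 1) * ((2/3 * x4 t + 2 * (α - 1) * x2 t ^ 2) * x4 t
            + x2 t * (3 * x6 t + 2 * (2 * α + 1) * x2 t * x4 t)))
        + 2 * (α - 1) * (2 * (2/3 * x4 t + 2 * (α - 1) * x2 t ^ 2)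
              * (2/3 * x4 t + 2 * (α - 1) * x2 t ^ 2)
            + 2 * x2 t * (2/3 * (3 * x6 t + 2 * (2 * α + 1) * x2 t * x4 t)
              + 2 * (α - 1) * (2 * x2 t * (2/3 * x4 t + 2 * (α - 1) * x2 t ^ 2))))) t := by
    intro t
    have q1 : HasDerivAt (fun t => 2/3 * (3 * x6 t + 2 * (2 * α + 1) * x2 t * x4 t))
        (2/3 * (3 * (6 * (α + 1) * x2 t * x6 t)
          + 2 * (2 * α + 1) * ((2/3 * x4 t + 2 * (α - 1) * x2 t ^ 2) * x4 t
            + x2 t * (3 * x6 t + 2 * (2 * α + 1) * x2 t * x4 t)))) t := by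
      have inner : HasDerivAt (fun t => 3 * x6 t + 2 * (2 * α + 1) * x2 t * x4 t)
          (3 * (6 * (α + 1) * x2 t * x6 t)
            + 2 * (2 * α + 1) * ((2/3 * x4 t + 2 * (α - 1) * x2 t ^ 2) * x4 t
              + x2 t * (3 * x6 t + 2 * (2 * α + 1) * x2 t * x4 t))) t := by
        have := ((h6' t).const_mul 3).add ((((h2' t).const_mul (2 * (2 * α + 1))).mul (h4' t)))
        exact this.congr_deriv (by ring)
      exact inner.const_mul (2/3)
    have q2 : HasDerivAt (fun t => 2 * (α - 1) * (2 * x2 t * (2/3 * x4 t + 2 * (α - 1) * x2 t ^ 2)))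
        (2 * (α - 1) * (2 * (2/3 * x4 t + 2 * (α - 1) * x2 t ^ 2)
              * (2/3 * x4 t + 2 * (α - 1) * x2 t ^ 2)
            + 2 * x2 t * (2/3 * (3 * x6 t + 2 * (2 * α + 1) * x2 t * x4 t)
              + 2 * (α - 1) * (2 * x2 t * (2/3 * x4 t + 2 * (α - 1) * x2 t ^ 2))))) t := by
      have inner : HasDerivAt (fun t => 2 * x2 t * (2/3 * x4 t + 2 * (α - 1) * x2 t ^ 2))
          (2 * (2/3 * x4 t + 2 * (α - 1) * x2 t ^ 2) * (2/3 * x4 t + 2 * (α - 1) * x2 t ^ 2)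
            + 2 * x2 t * (2/3 * (3 * x6 t + 2 * (2 * α + 1) * x2 t * x4 t)
              + 2 * (α - 1) * (2 * x2 t * (2/3 * x4 t + 2 * (α - 1) * x2 t ^ 2)))) t :=
        ((h2' t).const_mul 2).mul (hG t)
      exact inner.const_mul (2 * (α - 1))
    exact q1.add q2
  -- derivatives of U
  have hUd : deriv U = fun t => 1 / k * (2/3 * x4 t + 2 * (α - 1) * x2 t ^ 2) := by
    funext t
    rw [hU, deriv_const_mul _ (hx2 t), h2 t]
  have hUdd : deriv (deriv U) = fun t => 1 / k *
      (2/3 * (3 * x6 t + 2 * (2 * α + 1) * x2 t * x4 t)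
        + 2 * (α - 1) * (2 * x2 t * (2/3 * x4 t + 2 * (α - 1) * x2 t ^ 2))) := by
    rw [hUd]
    funext t
    rw [deriv_const_mul _ (hG t).differentiableAt, (hG t).deriv]
  have hUddd : ∀ t, deriv (deriv (deriv U)) t = 1 / k *
      (2/3 * (3 * (6 * (α + 1) * x2 t * x6 t)
          + 2 * (2 * α + 1) * ((2/3 * x4 t + 2 * (α - 1) * x2 t ^ 2) * x4 t
            + x2 t * (3 * x6 t + 2 * (2 * α + 1) * x2 t * x4 t)))
        + 2 * (α - 1) * (2 * (2/3 * x4 t + 2 * (α - 1) * x2 t ^ 2)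
              * (2/3 * x4 t + 2 * (α - 1) * x2 t ^ 2)
            + 2 * x2 t * (2/3 * (3 * x6 t + 2 * (2 * α + 1) * x2 t * x4 t)
              + 2 * (α - 1) * (2 * x2 t * (2/3 * x4 t + 2 * (α - 1) * x2 t ^ 2))))) := by
    intro t
    rw [hUdd, deriv_const_mul _ (hGG t).differentiableAt, (hGG t).deriv]
  have i2 : iteratedDeriv 2 U = deriv (deriv U) := by
    rw [iteratedDeriv_succ, iteratedDeriv_one]
  have i3 : iteratedDeriv 3 U = deriv (deriv (deriv U)) := by
    rw [iteratedDeriv_succ, i2]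
  intro t
  rw [i3, i2, hUddd t, hUdd, hUd, hU]
  simp only []
  field_simp
  have h5 : k ^ 11 * k⁻¹ ^ 5 = k ^ 6 := by
    rw [show (11:ℕ) = 6 + 5 from rfl, pow_add, mul_assoc, ← mul_pow, mul_inv_cancel₀ hk,
      one_pow, mul_one]
  ring
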